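/- Let a₁, b₁, a₂, b₂ be integers with a₁a₂(a₁b₂ - a₂b₁) ≠ 0, and let m₁, m₂, k₁, k₂, l be positive integers satisfying m₁ = k₂(a₁b₂ - a₂b₁)/(a₂(k₁ - k₂)), m₂ = k₁(a₁b₂ - a₂b₁)/(a₁(k₁ - k₂)), and k₁φ(m₁) = k₂φ(m₂). Suppose q₁ = k₁l + 1 and q₂ = k₂l + 1 are both primes, with qᵢ not dividing mᵢ for i = 1, 2. If n = (m₁q₁ - b₁)/a₁ is an integer, then a₁n + b₁ = m₁q₁, a₂n + b₂ = m₂q₂, and φ(a₁n + b₁) = φ(a₂n + b₂). -/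
import Mathlib


theorem stmt_4 (a₁ b₁ a₂ b₂ : ℤ) (h : a₁ * a₂ * (a₁ * b₂ - a₂ * b₁) ≠ 0)
    (m₁ m₂ k₁ k₂ l q₁ q₂ : ℕ)
    (hm₁pos : 0 < m₁) (hm₂pos : 0 < m₂) (hk₁pos : 0 < k₁) (hk₂pos : 0 < k₂) (hl : 0 < l)
    (hm₁ : (m₁ : ℤ) * (a₂ * ((k₁ : ℤ) - (k₂ : ℤ))) = (k₂ : ℤ) * (a₁ * b₂ - a₂ * b₁))
    (hm₂ : (m₂ : ℤ) * (a₁ * ((k₁ : ℤ) - (k₂ : ℤ))) = (k₁ : ℤ) * (a₁ * b₂ - a₂ * b₁))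
    (hφ : k₁ * Nat.totient m₁ = k₂ * Nat.totient m₂)
    (hq₁ : q₁ = k₁ * l + 1) (hq₂ : q₂ = k₂ * l + 1)
    (hq₁p : q₁.Prime) (hq₂p : q₂.Prime)
    (hq₁m : ¬ q₁ ∣ m₁) (hq₂m : ¬ q₂ ∣ m₂)
    (n : ℤ) (hn : a₁ * n = (m₁ : ℤ) * q₁ - b₁) :
    a₁ * n + b₁ = (m₁ : ℤ) * q₁ ∧ a₂ * n + b₂ = (m₂ : ℤ) * q₂ ∧
      Nat.totient (m₁ * q₁) = Nat.totient (m₂ * q₂) := by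
  have ha₁ : a₁ ≠ 0 := fun h0 => h (by simp [h0])
  have hD : a₁ * b₂ - a₂ * b₁ ≠ 0 := fun h0 => h (by simp [h0])
  have hk : (k₁ : ℤ) - (k₂ : ℤ) ≠ 0 := by
    intro h0
    apply hD
    have := hm₁
    rw [h0] at this
    simp at this
    rcases this with h1 | h1
    · exact absurd h1 (by exact_mod_cast hk₂pos.ne')
    · exact h1
  refine ⟨by linarith, ?_, ?_⟩
  · have key : a₁ * ((k₁ : ℤ) - k₂) * (a₂ * n + b₂ - (m₂ : ℤ) * q₂) = 0 := by
      have hq₁' : (q₁ : ℤ) = k₁ * l + 1 := by exact_mod_cast congrArg (Nat.cast : ℕ → ℤ) hq₁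
      have hq₂' : (q₂ : ℤ) = k₂ * l + 1 := by exact_mod_cast congrArg (Nat.cast : ℕ → ℤ) hq₂
      have e1 : a₂ * (a₁ * n) = a₂ * ((m₁ : ℤ) * q₁ - b₁) := by rw [hn]
      rw [hq₁'] at e1
      rw [hq₂']
      linear_combination ((k₁:ℤ) - k₂) * e1 + ((k₁:ℤ) * l + 1) * hm₁ - ((k₂:ℤ) * l + 1) * hm₂
    rcases mul_eq_zero.mp key with h0 | h0
    · exact absurd h0 (mul_ne_zero ha₁ hk)
    · linarith
  · have c₁ : Nat.Coprime m₁ q₁ := (Nat.Prime.coprime_iff_not_dvd hq₁p).mpr hq₁m |>.symm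
    have c₂ : Nat.Coprime m₂ q₂ := (Nat.Prime.coprime_iff_not_dvd hq₂p).mpr hq₂m |>.symm
    rw [Nat.totient_mul c₁, Nat.totient_mul c₂,
      Nat.totient_prime hq₁p, Nat.totient_prime hq₂p, hq₁, hq₂]
    simp only [Nat.add_sub_cancel]
    calc m₁.totient * (k₁ * l) = (k₁ * m₁.totient) * l := by ring
      _ = (k₂ * m₂.totient) * l := by rw [hφ]
      _ = m₂.totient * (k₂ * l) := by ring
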